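/- Let q be an odd prime power, n=(q+1)/2, s ∈ F_q, c = 1-s^2, and x a root of g_s(y)=y^n+(1-y)^n-s in an algebraic closure. Then x^q = c + x - 2cx + 2v·√(c-c^2)·√(x-x^2) for some v ∈ {1,-1}, where √(x-x^2) := (x^n - sx)/√c and √(c-c^2) := √c·√(1-c) for any fixed square roots √c, √(1-c) of c, 1-c (assumed to exist in F_q, with c ≠ 0). -/

import Mathlib

theorem stmt13 (F : Type*) [Field F] [Fintype F] (hodd : Odd (Fintype.card F))
    (n : ℕ) (hn : n = (Fintype.card F + 1) / 2)
    (s c : F) (hc : c = 1 - s ^ 2) (hc0 : c ≠ 0)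
    (sc s1c : F) (hsc : sc ^ 2 = c) (hs1c : s1c ^ 2 = 1 - c)
    (x : AlgebraicClosure F)
    (hx : x ^ n + (1 - x) ^ n = algebraMap F (AlgebraicClosure F) s) :
    ∃ v : F, (v = 1 ∨ v = -1) ∧
      x ^ Fintype.card F =
        algebraMap F (AlgebraicClosure F) c + x - 2 * algebraMap F (AlgebraicClosure F) c * x
          + 2 * algebraMap F (AlgebraicClosure F) v
            * algebraMap F (AlgebraicClosure F) (sc * s1c)
            * ((x ^ n - algebraMap F (AlgebraicClosure F) s * x)
                / algebraMap F (AlgebraicClosure F) sc) := by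
  set f := algebraMap F (AlgebraicClosure F) with hf
  set q := Fintype.card F with hq
  -- choose v
  obtain ⟨v, hv1, hvs⟩ : ∃ v : F, (v = 1 ∨ v = -1) ∧ v * s1c = s := by
    have h : (s1c - s) * (s1c + s) = 0 := by
      have h2 : s1c ^ 2 = s ^ 2 := by rw [hs1c, hc]; ring
      linear_combination h2
    rcases mul_eq_zero.1 h with h | h
    · exact ⟨1, Or.inl rfl, by linear_combination h⟩
    · exact ⟨-1, Or.inr rfl, by linear_combination -h⟩
  have h2n : 2 * n = q + 1 := by
    obtain ⟨m, hm⟩ := hodd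
    omega
  -- characteristic facts
  haveI hp : Fact (ringChar F).Prime := ⟨CharP.char_is_prime F (ringChar F)⟩
  haveI : CharP (AlgebraicClosure F) (ringChar F) :=
    charP_of_injective_algebraMap (algebraMap F (AlgebraicClosure F)).injective (ringChar F)
  obtain ⟨k, hk⟩ := FiniteField.card F (ringChar F)
  have hfrob : (1 - x) ^ q = 1 - x ^ q := by
    rw [hq, hk.2, sub_pow_char_pow, one_pow]
  have hu2 : x ^ q * x = (x ^ n) ^ 2 := by
    rw [← pow_succ, ← h2n, mul_comm 2 n, pow_mul]
  have hw2 : (1 - x ^ q) * (1 - x) = (f s - x ^ n) ^ 2 := by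
    have h1 : (1 - x) ^ n = f s - x ^ n := by linear_combination hx
    calc (1 - x ^ q) * (1 - x) = (1 - x) ^ q * (1 - x) := by rw [hfrob]
      _ = (1 - x) ^ (q + 1) := by rw [← pow_succ]
      _ = ((1 - x) ^ n) ^ 2 := by rw [← h2n, mul_comm 2 n, pow_mul]
      _ = (f s - x ^ n) ^ 2 := by rw [h1]
  have key : x ^ q = 1 - x - f s ^ 2 + 2 * f s * x ^ n := by
    linear_combination -hw2 + hu2
  have hscne : sc ≠ 0 := fun h => hc0 (by rw [← hsc, h]; ring)
  have hsc0 : f sc ≠ 0 := by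
    simpa [hf] using (map_ne_zero f).2 hscne
  refine ⟨v, hv1, ?_⟩
  have hfv : f v * f s1c = f s := by rw [← map_mul, hvs]
  have hfc : f c = 1 - f s ^ 2 := by rw [hc, map_sub, map_pow, map_one]
  rw [map_mul]
  field_simp
  linear_combination key + (2 * (f s * x - x ^ n)) * hfv
    + (2 * x - 1) * hfc
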